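/- Let ξ = ξ₁ + ξ₂ on ℝ^m where ξ₁ is differentiable and convex with L-Lipschitz continuous gradient and ξ₂ is strongly convex with modulus μ > 0, and let u* be the unique minimizer of ξ over the closed convex set U. Suppose the sequence {u^k} satisfies, for all k ≥ 1: u^k minimizes Q(u, û^{k−1}) = ξ₁(û^{k−1}) + ⟨∇ξ₁(û^{k−1}), u − û^{k−1}⟩ + (L_k/2)‖u − û^{k−1}‖² + ξ₂(u) over U, where û^{k−1} = u^{k−1} + ω_{k−1}(u^{k−1} − u^{k−2}) with 0 ≤ ω_{k−1} ≤ √(L_{k−1}/L_k) and 0 < L_k ≤ L; the descent condition ξ₁(u^k) ≤ ξ₁(û^{k−1}) + ⟨∇ξ₁(û^{k−1}), u^k − û^{k−1}⟩ + (L_k/2)‖u^k − û^{k−1}‖² holds; and ξ(u^k) ≤ ξ(u^{k−1}). Then {u^k} converges R-linearly to u*: there exist C > 0 and 0 < τ < 1 such that ‖u^k − u*‖ ≤ C τ^k for all k ≥ 0. -/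

import Mathlib

open scoped RealInnerProductSpace

/-- The subdifferential of `h` at `v`: the set of (global) subgradients. -/
def SubderivAt {m : ℕ} (h : EuclideanSpace ℝ (Fin m) → ℝ)
    (v : EuclideanSpace ℝ (Fin m)) : Set (EuclideanSpace ℝ (Fin m)) :=
  {g | ∀ z, h z ≥ h v + ⟪g, z - v⟫}


section Aux

variable {m : ℕ}
local notation "E" => EuclideanSpace ℝ (Fin m)

lemma aux_le_of_forall_small {a b K : ℝ} (h : ∀ ε : ℝ, 0 < ε → ε ≤ 1 → b ≤ a + ε * K) :
    b ≤ a := by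
  rcases le_or_gt K 0 with hK | hK
  · have := h 1 one_pos le_rfl; nlinarith
  · refine le_of_forall_pos_le_add fun δ hδ => ?_
    rcases le_or_gt (δ / K) 1 with hd | hd
    · have := h (δ / K) (by positivity) hd
      rw [div_mul_cancel₀ _ hK.ne'] at this; linarith
    · have := h 1 one_pos le_rfl
      rw [lt_div_iff₀ hK] at hd; nlinarith

/-- gradient inequality for convex differentiable functions -/
lemma aux_grad_ineq (f : E → ℝ) (hf : ConvexOn ℝ Set.univ f) {g x : E}
    (hd : HasGradientAt f g x) (y : E) : f x + ⟪g, y - x⟫ ≤ f y := by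
  have hline : ∀ t : ℝ, HasDerivAt (fun s : ℝ => x + s • (y - x)) (y - x) t := by
    intro t
    simpa using ((hasDerivAt_id t).smul_const (y - x)).const_add x
  have hF : HasDerivAt (fun t : ℝ => f (x + t • (y - x))) ⟪g, y - x⟫ 0 := by
    have hcomp := HasFDerivAt.comp_hasDerivAt 0
      (show HasFDerivAt f (InnerProductSpace.toDual ℝ _ g) (x + (0:ℝ) • (y - x)) by
        simpa using hasGradientAt_iff_hasFDerivAt.mp hd) (hline 0)
    exact hcomp
  have hFc : ConvexOn ℝ Set.univ (fun t : ℝ => f (x + t • (y - x))) := by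
    have affine : ConvexOn ℝ Set.univ (f ∘ (AffineMap.lineMap x y : ℝ →ᵃ[ℝ] E)) := by
      have := hf.comp_affineMap (AffineMap.lineMap x y : ℝ →ᵃ[ℝ] E)
      simpa using this
    convert affine using 2 with t
    simp [AffineMap.lineMap_apply, add_comm]
  have hslope := hFc.le_slope_of_hasDerivAt (Set.mem_univ (0:ℝ)) (Set.mem_univ (1:ℝ))
    one_pos hF
  rw [slope_def_field] at hslope
  have e1 : x + (1:ℝ) • (y - x) = y := by simp
  have e0 : x + (0:ℝ) • (y - x) = x := by simp
  rw [e1, e0, show (1:ℝ) - 0 = 1 by norm_num, div_one] at hslope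
  linarith [hslope]

/-- existence of subgradients for convex functions on Euclidean space -/
lemma aux_subgrad_exists (f : E → ℝ) (hf : ConvexOn ℝ Set.univ f) (v : E) :
    ∃ g, g ∈ SubderivAt f v := by
  have hcont : Continuous f := by
    rw [← continuousOn_univ]
    exact hf.continuousOn isOpen_univ
  set S : Set (E × ℝ) := {p | f p.1 < p.2} with hS
  have hSopen : IsOpen S := isOpen_lt (hcont.comp continuous_fst) continuous_snd
  have hSconv : Convex ℝ S := by
    intro p hp q hq a b ha hb hab
    simp only [hS, Set.mem_setOf_eq] at *
    have h1 : f (a • p.1 + b • q.1) ≤ a * f p.1 + b * f q.1 :=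
      hf.2 (Set.mem_univ _) (Set.mem_univ _) ha hb hab
    have h2 : a * f p.1 + b * f q.1 < a * p.2 + b * q.2 := by
      rcases eq_or_lt_of_le ha with rfl | ha'
      · simp only [zero_mul, zero_add]
        have hb1 : b = 1 := by linarith
        nlinarith
      · nlinarith [mul_le_mul_of_nonneg_left hq.le hb]
    calc f ((a • p + b • q).1) = f (a • p.1 + b • q.1) := rfl
      _ < a * p.2 + b * q.2 := lt_of_le_of_lt h1 h2
      _ = (a • p + b • q).2 := by simp
  have hv : ((v, f v) : E × ℝ) ∉ S := by simp [hS]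
  obtain ⟨φ, hφ⟩ := geometric_hahn_banach_open_point hSconv hSopen hv
  set c : ℝ := φ (0, 1) with hc
  have hkey : ∀ z : E, ∀ t : ℝ, f z < t → φ (z, f z) + (t - f z) * c < φ (v, f v) := by
    intro z t ht
    have hzt : ((z, t) : E × ℝ) ∈ S := ht
    have := hφ _ hzt
    have heq : φ (z, t) = φ (z, f z) + (t - f z) * c := by
      have : ((z, t) : E × ℝ) = (z, f z) + (t - f z) • ((0 : E), (1 : ℝ)) := by
        simp [Prod.ext_iff]
      rw [this, map_add, map_smul, smul_eq_mul]
    linarith [heq ▸ this]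
  have hcneg : c < 0 := by
    have := hkey v (f v + 1) (by linarith)
    simpa using this
  -- the subgradient
  set ψ : E →L[ℝ] ℝ := φ.comp (ContinuousLinearMap.inl ℝ E ℝ) with hψ
  have hψeq : ∀ z : E, φ (z, f z) = ψ z + f z * c := by
    intro z
    have : ((z, f z) : E × ℝ) = ((z, 0) : E × ℝ) + (f z) • ((0 : E), (1 : ℝ)) := by
      simp [Prod.ext_iff]
    rw [this, map_add, map_smul, smul_eq_mul]
    simp [hψ, hc]
  set w : E := (InnerProductSpace.toDual ℝ E).symm ψ with hw
  have hwz : ∀ z : E, ψ z = ⟪w, z⟫ := by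
    intro z
    rw [hw]
    exact (InnerProductSpace.toDual_symm_apply).symm
  refine ⟨(-1/c) • w, fun z => ?_⟩
  have hineq : ψ z + f z * c ≤ ψ v + f v * c := by
    refine aux_le_of_forall_small (K := -c) fun ε hε _ => ?_
    have hk := hkey z (f z + ε) (by linarith)
    rw [hψeq z, hψeq v] at hk
    nlinarith [hk]
  have hinner : ⟪(-1/c : ℝ) • w, z - v⟫ = (-1/c) * (ψ z - ψ v) := by
    rw [real_inner_smul_left, inner_sub_right, ← hwz z, ← hwz v]
  show f z ≥ f v + ⟪(-1/c : ℝ) • w, z - v⟫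
  rw [hinner]
  have h2 : ψ z - ψ v ≤ (f v - f z) * c := by linarith
  have hpos : 0 < (-1 : ℝ)/c := by
    rw [div_pos_iff]; right; constructor <;> linarith
  have h3 := mul_le_mul_of_nonneg_left h2 hpos.le
  rw [show (-1/c) * ((f v - f z) * c) = f z - f v by have := hcneg.ne; field_simp; ring] at h3
  linarith

/-- norm of convex combination identity -/
lemma aux_norm_combo (a b : E) (t : ℝ) :
    ‖a + t • (b - a)‖^2 = (1-t)*‖a‖^2 + t*‖b‖^2 - t*(1-t)*‖b - a‖^2 := by
  have h1 : ‖a + t • (b-a)‖^2 = ‖a‖^2 + 2*(t*⟪a, b-a⟫) + t^2*‖b-a‖^2 := by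
    rw [norm_add_sq_real, real_inner_smul_right, norm_smul]
    simp [Real.norm_eq_abs, mul_pow, sq_abs]
    try ring
  have h2 : ‖b‖^2 = ‖a‖^2 + 2*⟪a, b-a⟫ + ‖b-a‖^2 := by
    have e : b = a + (b - a) := by abel
    nth_rewrite 1 [e]
    rw [norm_add_sq_real]
  rw [h1, h2]; ring

/-- strong convexity along segments -/
lemma aux_sc_segment (f : E → ℝ) (μ : ℝ) (hf : ConvexOn ℝ Set.univ f)
    (hsc : ∀ u v g, g ∈ SubderivAt f v → f u - f v ≥ ⟪g, u - v⟫ + μ / 2 * ‖u - v‖ ^ 2)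
    (x y : E) (t : ℝ) (ht0 : 0 ≤ t) (ht1 : t ≤ 1) :
    f (x + t • (y - x)) ≤ (1-t) * f x + t * f y - μ/2 * (t*(1-t)) * ‖y - x‖^2 := by
  obtain ⟨g, hg⟩ := aux_subgrad_exists f hf (x + t • (y - x))
  have h1 := hsc x (x + t • (y - x)) g hg
  have h2 := hsc y (x + t • (y - x)) g hg
  have hxp : x - (x + t • (y - x)) = (-t) • (y - x) := by module
  have hyp : y - (x + t • (y - x)) = (1-t) • (y - x) := by module
  rw [hxp] at h1
  rw [hyp] at h2
  rw [real_inner_smul_right, norm_smul, Real.norm_eq_abs, mul_pow, sq_abs] at h1 h2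
  have H1 : 0 ≤ (1-t) * (f x - f (x + t • (y - x)) - ((-t) * ⟪g, y - x⟫ + μ/2 * (t^2 * ‖y-x‖^2))) :=
    mul_nonneg (by linarith) (by linarith)
  have H2 : 0 ≤ t * (f y - f (x + t • (y - x)) - ((1-t) * ⟪g, y - x⟫ + μ/2 * ((1-t)^2 * ‖y-x‖^2))) :=
    mul_nonneg ht0 (by linarith)
  nlinarith [H1, H2]

/-- quadratic growth at a constrained minimizer of a strongly convex function -/
lemma aux_min_quad_growth (F : E → ℝ) (M : ℝ) (S : Set E) (hS : Convex ℝ S)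
    (hseg : ∀ x ∈ S, ∀ y ∈ S, ∀ t : ℝ, 0 ≤ t → t ≤ 1 →
      F (x + t • (y - x)) ≤ (1-t) * F x + t * F y - M/2 * (t*(1-t)) * ‖y - x‖^2)
    (x : E) (hx : x ∈ S) (hmin : ∀ v ∈ S, F x ≤ F v) (v : E) (hv : v ∈ S) :
    F x + M/2 * ‖v - x‖^2 ≤ F v := by
  refine aux_le_of_forall_small (K := M/2 * ‖v - x‖^2) fun t ht0 ht1 => ?_
  have hmem : x + t • (v - x) ∈ S := by
    have h := hS hx hv (by linarith : (0:ℝ) ≤ 1 - t) ht0.le (by ring)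
    convert h using 1
    module
  have h1 := hseg x hx v hv t ht0.le ht1
  have h2 := hmin _ hmem
  have h3 : 0 ≤ t * (F v - F x - M/2*(1-t)*‖v-x‖^2) := by nlinarith
  have h4 : 0 ≤ F v - F x - M/2*(1-t)*‖v-x‖^2 := by
    by_contra hcon
    push_neg at hcon
    nlinarith
  nlinarith

end Aux

set_option maxHeartbeats 1600000 in
/-- R-linear convergence of the proximal gradient method with
extrapolation under strong convexity.  The sequence is indexed by `ℕ` with the
convention `u^{-1} = u^0` (realized by truncated subtraction: `1 - 2 = 0`). -/
theorem pg_R_linear_convergence (m : ℕ)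
    (ξ₁ ξ₂ : EuclideanSpace ℝ (Fin m) → ℝ)
    (gradξ₁ : EuclideanSpace ℝ (Fin m) → EuclideanSpace ℝ (Fin m))
    (L : ℝ) (hL : 0 < L)
    (hξ₁conv : ConvexOn ℝ Set.univ ξ₁)
    (hξ₁diff : ∀ u, HasGradientAt ξ₁ (gradξ₁ u) u)
    (hξ₁lip : ∀ u v, ‖gradξ₁ u - gradξ₁ v‖ ≤ L * ‖u - v‖)
    (μ : ℝ) (hμ : 0 < μ)
    (hξ₂conv : ConvexOn ℝ Set.univ ξ₂)
    (hξ₂sc : ∀ u v g, g ∈ SubderivAt ξ₂ v →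
      ξ₂ u - ξ₂ v ≥ ⟪g, u - v⟫ + μ / 2 * ‖u - v‖ ^ 2)
    (Uset : Set (EuclideanSpace ℝ (Fin m))) (hUconv : Convex ℝ Uset)
    (hUclosed : IsClosed Uset)
    (ustar : EuclideanSpace ℝ (Fin m)) (hstar : ustar ∈ Uset)
    (hstarmin : ∀ v ∈ Uset, ξ₁ ustar + ξ₂ ustar ≤ ξ₁ v + ξ₂ v)
    (u : ℕ → EuclideanSpace ℝ (Fin m))
    (Lk : ℕ → ℝ) (ω : ℕ → ℝ)
    (uhat : ℕ → EuclideanSpace ℝ (Fin m))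
    (hu0 : u 0 ∈ Uset)
    (hLk : ∀ k, 0 < Lk k ∧ Lk k ≤ L)
    (hω : ∀ k : ℕ, 1 ≤ k → 0 ≤ ω (k - 1) ∧ ω (k - 1) ≤ Real.sqrt (Lk (k - 1) / Lk k))
    (huhat : ∀ k : ℕ, 1 ≤ k → uhat (k - 1) = u (k - 1) + ω (k - 1) • (u (k - 1) - u (k - 2)))
    (hmem : ∀ k : ℕ, 1 ≤ k → u k ∈ Uset)
    (hmin : ∀ k : ℕ, 1 ≤ k → ∀ v ∈ Uset,
      ξ₁ (uhat (k - 1)) + ⟪gradξ₁ (uhat (k - 1)), u k - uhat (k - 1)⟫ +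
          Lk k / 2 * ‖u k - uhat (k - 1)‖ ^ 2 + ξ₂ (u k) ≤
        ξ₁ (uhat (k - 1)) + ⟪gradξ₁ (uhat (k - 1)), v - uhat (k - 1)⟫ +
          Lk k / 2 * ‖v - uhat (k - 1)‖ ^ 2 + ξ₂ v)
    (hdesc : ∀ k : ℕ, 1 ≤ k →
      ξ₁ (u k) ≤ ξ₁ (uhat (k - 1)) + ⟪gradξ₁ (uhat (k - 1)), u k - uhat (k - 1)⟫ +
        Lk k / 2 * ‖u k - uhat (k - 1)‖ ^ 2)
    (hmono : ∀ k : ℕ, 1 ≤ k → ξ₁ (u k) + ξ₂ (u k) ≤ ξ₁ (u (k - 1)) + ξ₂ (u (k - 1))) :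
    ∃ C > 0, ∃ τ : ℝ, 0 < τ ∧ τ < 1 ∧ ∀ k : ℕ, ‖u k - ustar‖ ≤ C * τ ^ k := by
  have hLkpos : ∀ k, 0 < Lk k := fun k => (hLk k).1
  have hLkle : ∀ k, Lk k ≤ L := fun k => (hLk k).2
  -- opaque abbreviations
  obtain ⟨d, hdd⟩ : ∃ f : ℕ → ℝ, ∀ k, f k = ‖u k - ustar‖ := ⟨_, fun _ => rfl⟩
  obtain ⟨s, hss⟩ : ∃ f : ℕ → ℝ, ∀ k, f k = ‖u k - u (k-1)‖ := ⟨_, fun _ => rfl⟩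
  obtain ⟨Δ, hΔΔ⟩ : ∃ f : ℕ → ℝ, ∀ k, f k = ξ₁ (u k) + ξ₂ (u k) - (ξ₁ ustar + ξ₂ ustar) :=
    ⟨_, fun _ => rfl⟩
  obtain ⟨G, hGG⟩ : ∃ f : ℕ → ℝ, ∀ k, f k = Δ k + Lk k/2 * s k^2 := ⟨_, fun _ => rfl⟩
  have hmemU : ∀ k, u k ∈ Uset := by
    intro k
    cases k with
    | zero => exact hu0
    | succ n => exact hmem (n+1) (by omega)
  have hΔnn : ∀ k, 0 ≤ Δ k := by
    intro k
    have := hstarmin (u k) (hmemU k)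
    rw [hΔΔ]; linarith
  have hsnn : ∀ k, 0 ≤ s k := fun k => (hss k) ▸ norm_nonneg _
  have hGnn : ∀ k, 0 ≤ G k := by
    intro k
    have h2 : 0 ≤ Lk k/2 * s k^2 := mul_nonneg (by linarith [hLkpos k]) (sq_nonneg _)
    have h1 := hΔnn k
    rw [hGG]
    exact add_nonneg h1 h2
  have hs0 : s 0 = 0 := by rw [hss]; simp
  have hωn : ∀ n, 0 ≤ ω n := by
    intro n
    have h := (hω (n+1) (by omega)).1
    simpa using h
  have hωsq : ∀ n, Lk (n+1) * ω n^2 ≤ Lk n := by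
    intro n
    have h := (hω (n+1) (by omega)).2
    simp only [Nat.add_sub_cancel] at h
    have h2 : ω n^2 ≤ Lk n / Lk (n+1) := by
      have hsq := Real.sq_sqrt (show (0:ℝ) ≤ Lk n / Lk (n+1) from
        le_of_lt (div_pos (hLkpos n) (hLkpos (n+1))))
      nlinarith [hωn n, Real.sqrt_nonneg (Lk n / Lk (n+1))]
    rw [le_div_iff₀ (hLkpos (n+1))] at h2
    linarith
  have hhat : ∀ n, u n - uhat n = -(ω n • (u n - u (n-1))) := by
    intro n
    cases n with
    | zero =>
      have h := huhat 1 le_rfl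
      simp only [show (1:ℕ)-1 = 0 from rfl, show (1:ℕ)-2 = 0 from rfl, sub_self,
        smul_zero, add_zero] at h
      rw [h]
      simp
    | succ n =>
      have h := huhat (n+2) (by omega)
      simp only [show ∀ j:ℕ, j+2-1 = j+1 from fun j => rfl,
        show ∀ j:ℕ, j+2-2 = j from fun j => rfl] at h
      rw [h]
      simp only [show (n+1)-1 = n from rfl]
      module
  have hnormhat : ∀ n, ‖u n - uhat n‖ = ω n * s n := by
    intro n
    rw [hhat n, norm_neg, norm_smul, Real.norm_eq_abs, abs_of_nonneg (hωn n), hss]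
  -- gradient inequality
  have hgi : ∀ x y : EuclideanSpace ℝ (Fin m), ξ₁ x + ⟪gradξ₁ x, y - x⟫ ≤ ξ₁ y :=
    fun x y => aux_grad_ineq ξ₁ hξ₁conv (hξ₁diff x) y
  -- quadratic growth of ξ at ustar
  have hgrowth : ∀ v ∈ Uset,
      ξ₁ ustar + ξ₂ ustar + μ/2 * ‖v - ustar‖^2 ≤ ξ₁ v + ξ₂ v := by
    intro v hv
    refine aux_min_quad_growth (fun w => ξ₁ w + ξ₂ w) μ Uset hUconv ?_ ustar hstar hstarmin v hv
    intro x hx y hy t ht0 ht1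
    have h1 : ξ₁ (x + t • (y - x)) ≤ (1-t) * ξ₁ x + t * ξ₁ y := by
      have h := hξ₁conv.2 (Set.mem_univ x) (Set.mem_univ y)
        (by linarith : (0:ℝ) ≤ 1-t) ht0 (by ring)
      have e : (1-t) • x + t • y = x + t • (y - x) := by module
      rw [e] at h
      simpa using h
    have h2 := aux_sc_segment ξ₂ μ hξ₂conv hξ₂sc x y t ht0 ht1
    linarith
  have hqg : ∀ k, μ/2 * d k^2 ≤ Δ k := by
    intro k
    have := hgrowth (u k) (hmemU k)
    rw [hΔΔ, hdd]; linarith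
  -- quadratic growth of the subproblem objective at its minimizer u (n+1)
  have hQgrow : ∀ n, ∀ v ∈ Uset,
      (ξ₁ (uhat n) + ⟪gradξ₁ (uhat n), u (n+1) - uhat n⟫ +
        Lk (n+1)/2 * ‖u (n+1) - uhat n‖^2 + ξ₂ (u (n+1)))
      + (Lk (n+1) + μ)/2 * ‖v - u (n+1)‖^2 ≤
      ξ₁ (uhat n) + ⟪gradξ₁ (uhat n), v - uhat n⟫ +
        Lk (n+1)/2 * ‖v - uhat n‖^2 + ξ₂ v := by
    intro n
    have hminn : ∀ v ∈ Uset,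
        (fun w => ξ₁ (uhat n) + ⟪gradξ₁ (uhat n), w - uhat n⟫ +
          Lk (n+1)/2 * ‖w - uhat n‖^2 + ξ₂ w) (u (n+1)) ≤
        (fun w => ξ₁ (uhat n) + ⟪gradξ₁ (uhat n), w - uhat n⟫ +
          Lk (n+1)/2 * ‖w - uhat n‖^2 + ξ₂ w) v := by
      intro v hv
      have h := hmin (n+1) (by omega) v hv
      simpa only [Nat.add_sub_cancel] using h
    intro v hv
    have h := aux_min_quad_growth
      (fun w => ξ₁ (uhat n) + ⟪gradξ₁ (uhat n), w - uhat n⟫ +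
        Lk (n+1)/2 * ‖w - uhat n‖^2 + ξ₂ w)
      (Lk (n+1) + μ) Uset hUconv ?_ (u (n+1)) (hmemU (n+1)) hminn v hv
    · linarith [h]
    intro x hx y hy t ht0 ht1
    have h2 := aux_sc_segment ξ₂ μ hξ₂conv hξ₂sc x y t ht0 ht1
    have hlin : ⟪gradξ₁ (uhat n), (x + t • (y - x)) - uhat n⟫
        = (1-t) * ⟪gradξ₁ (uhat n), x - uhat n⟫ + t * ⟪gradξ₁ (uhat n), y - uhat n⟫ := by
      have e : (x + t • (y - x)) - uhat n
          = (x - uhat n) + t • ((y - uhat n) - (x - uhat n)) := by module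
      rw [e]
      simp only [inner_add_right, inner_sub_right, real_inner_smul_right]
      ring
    have hquad : ‖(x + t • (y - x)) - uhat n‖^2
        = (1-t)*‖x - uhat n‖^2 + t*‖y - uhat n‖^2 - t*(1-t)*‖y - x‖^2 := by
      have e : (x + t • (y - x)) - uhat n
          = (x - uhat n) + t • ((y - uhat n) - (x - uhat n)) := by module
      rw [e, aux_norm_combo]
      have e2 : (y - uhat n) - (x - uhat n) = y - x := by module
      rw [e2]
    rw [hlin, hquad]
    nlinarith [h2, sq_nonneg (s n)]
  -- key recursion (A)
  have hA : ∀ n, G (n+1) + μ/2 * s (n+1)^2 ≤ G n := by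
    intro n
    have h1 := hQgrow n (u n) (hmemU n)
    have h2 := hdesc (n+1) (by omega)
    simp only [Nat.add_sub_cancel] at h2
    have h3 := hgi (uhat n) (u n)
    have h4 : Lk (n+1)/2 * ‖u n - uhat n‖^2 ≤ Lk n/2 * s n^2 := by
      rw [hnormhat n, mul_pow]
      nlinarith [mul_nonneg (sub_nonneg.2 (hωsq n)) (sq_nonneg (s n))]
    have h5 : ‖u n - u (n+1)‖ = s (n+1) := by
      rw [hss (n+1), show n+1-1 = n from rfl, norm_sub_rev]
    rw [h5] at h1
    rw [hGG, hGG, hΔΔ, hΔΔ]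
    linarith [h1, h2, h3, h4]
  -- monotonicity of Δ
  have hΔmono : ∀ n, Δ (n+1) ≤ Δ n := by
    intro n
    have h := hmono (n+1) (by omega)
    simp only [Nat.add_sub_cancel] at h
    rw [hΔΔ, hΔΔ]
    linarith
  have hdnn : ∀ k, 0 ≤ d k := fun k => (hdd k) ▸ norm_nonneg _
  -- inequality (B)
  have hB : ∀ n, Δ (n+1) ≤ Lk (n+1) * d n^2 + Lk n * s n^2 := by
    intro n
    have h1 := hQgrow n ustar hstar
    have h2 := hdesc (n+1) (by omega)
    simp only [Nat.add_sub_cancel] at h2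
    have h3 := hgi (uhat n) ustar
    have htri : ‖ustar - uhat n‖ ≤ d n + ω n * s n := by
      have e : ustar - uhat n = (ustar - u n) + (u n - uhat n) := by abel
      rw [e]
      refine (norm_add_le _ _).trans ?_
      rw [hnormhat n]
      have e2 : ‖ustar - u n‖ = d n := by rw [hdd n, norm_sub_rev]
      linarith [e2.le]
    have h4 : Lk (n+1)/2 * ‖ustar - uhat n‖^2 ≤ Lk (n+1) * d n^2 + Lk n * s n^2 := by
      have t1 : ‖ustar - uhat n‖^2 ≤ 2*d n^2 + 2*(ω n * s n)^2 := by
        nlinarith [htri, norm_nonneg (ustar - uhat n), sq_nonneg (d n - ω n * s n),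
          mul_nonneg (hωn n) (hsnn n), hdnn n]
      have t2 : Lk (n+1) * (ω n * s n)^2 ≤ Lk n * s n^2 := by
        rw [mul_pow]
        nlinarith [mul_nonneg (sub_nonneg.2 (hωsq n)) (sq_nonneg (s n))]
      nlinarith [mul_le_mul_of_nonneg_left t1 (le_of_lt (hLkpos (n+1)))]
    have h5 : 0 ≤ (Lk (n+1) + μ)/2 * ‖ustar - u (n+1)‖^2 :=
      mul_nonneg (by linarith [hLkpos (n+1)]) (sq_nonneg _)
    rw [hΔΔ]
    linarith [h1, h2, h3, h4, h5]
  -- variational inequality at the minimizer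
  have hVI : ∀ n, ξ₂ (u (n+1)) - ξ₂ ustar ≤ ⟪gradξ₁ (uhat n), ustar - u (n+1)⟫ +
      Lk (n+1) * ⟪u (n+1) - uhat n, ustar - u (n+1)⟫ := by
    intro n
    have h1 := hQgrow n ustar hstar
    have e : ustar - uhat n = (u (n+1) - uhat n) + (ustar - u (n+1)) := by abel
    have hexp : ‖ustar - uhat n‖^2 = ‖u (n+1) - uhat n‖^2 +
        2*⟪u (n+1) - uhat n, ustar - u (n+1)⟫ + ‖ustar - u (n+1)‖^2 := by
      rw [e, norm_add_sq_real]
    have hlin : ⟪gradξ₁ (uhat n), ustar - uhat n⟫ = ⟪gradξ₁ (uhat n), u (n+1) - uhat n⟫ +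
        ⟪gradξ₁ (uhat n), ustar - u (n+1)⟫ := by
      rw [e, inner_add_right]
    rw [hexp, hlin] at h1
    have h5 : 0 ≤ μ/2 * ‖ustar - u (n+1)‖^2 := mul_nonneg (by linarith) (sq_nonneg _)
    linarith [h1, h5]
  -- error bound
  have hEB : ∀ n, Δ (n+1) ≤ 2*L*‖u (n+1) - uhat n‖ * d (n+1) := by
    intro n
    have h5 := hgi (u (n+1)) ustar
    have hvi := hVI n
    have hna : ‖gradξ₁ (u (n+1)) - gradξ₁ (uhat n) - Lk (n+1) • (u (n+1) - uhat n)‖ ≤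
        2*L*‖u (n+1) - uhat n‖ := by
      have t1 := norm_sub_le (gradξ₁ (u (n+1)) - gradξ₁ (uhat n)) (Lk (n+1) • (u (n+1) - uhat n))
      have t2 : ‖Lk (n+1) • (u (n+1) - uhat n)‖ = Lk (n+1) * ‖u (n+1) - uhat n‖ := by
        rw [norm_smul, Real.norm_eq_abs, abs_of_pos (hLkpos (n+1))]
      have t3 := hξ₁lip (u (n+1)) (uhat n)
      have t4 : Lk (n+1) * ‖u (n+1) - uhat n‖ ≤ L * ‖u (n+1) - uhat n‖ :=
        mul_le_mul_of_nonneg_right (hLkle (n+1)) (norm_nonneg _)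
      rw [t2] at t1
      linarith
    have hip : Δ (n+1) ≤
        ⟪gradξ₁ (u (n+1)) - gradξ₁ (uhat n) - Lk (n+1) • (u (n+1) - uhat n), u (n+1) - ustar⟫ := by
      have hexp : ⟪gradξ₁ (u (n+1)) - gradξ₁ (uhat n) - Lk (n+1) • (u (n+1) - uhat n), u (n+1) - ustar⟫
          = ⟪gradξ₁ (u (n+1)), u (n+1) - ustar⟫ - ⟪gradξ₁ (uhat n), u (n+1) - ustar⟫ -
            Lk (n+1) * ⟪u (n+1) - uhat n, u (n+1) - ustar⟫ := by
        simp only [inner_sub_left, real_inner_smul_left]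
      have eneg : ustar - u (n+1) = -(u (n+1) - ustar) := by abel
      rw [eneg, inner_neg_right, inner_neg_right] at hvi
      rw [eneg, inner_neg_right] at h5
      rw [hΔΔ, hexp]
      linarith [hvi, h5]
    have hcs := real_inner_le_norm (gradξ₁ (u (n+1)) - gradξ₁ (uhat n) - Lk (n+1) • (u (n+1) - uhat n)) (u (n+1) - ustar)
    have hfin : ⟪gradξ₁ (u (n+1)) - gradξ₁ (uhat n) - Lk (n+1) • (u (n+1) - uhat n), u (n+1) - ustar⟫
        ≤ 2*L*‖u (n+1) - uhat n‖ * d (n+1) := by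
      rw [hdd (n+1)]
      exact hcs.trans (mul_le_mul_of_nonneg_right hna (norm_nonneg _))
    linarith [hip, hfin]
  have hEB3 : ∀ n, μ * Δ (n+1) ≤ 8*L^2 * ‖u (n+1) - uhat n‖^2 := by
    intro n
    have h1 := hEB n
    have h2 := hqg (n+1)
    rcases eq_or_lt_of_le (hdnn (n+1)) with h0 | h0
    · have t1 : Δ (n+1) ≤ 0 := by rw [← h0] at h1; linarith [h1]
      have t2 : (0:ℝ) ≤ 8*L^2 * ‖u (n+1) - uhat n‖^2 := by positivity
      nlinarith [mul_le_mul_of_nonneg_left t1 hμ.le]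
    · have key : μ * d (n+1) ≤ 4*L*‖u (n+1) - uhat n‖ := by
        have h3 : μ * d (n+1) * d (n+1) ≤ 4*L*‖u (n+1) - uhat n‖ * d (n+1) := by
          nlinarith [h1, h2]
        exact le_of_mul_le_mul_right h3 h0
      nlinarith [mul_le_mul_of_nonneg_left key
          (by positivity : (0:ℝ) ≤ 2*L*‖u (n+1) - uhat n‖),
        mul_le_mul_of_nonneg_left h1 hμ.le]
  have hEB4 : ∀ n, μ * Δ (n+2) ≤ 16*L^2 * (s (n+2)^2 + ω (n+1)^2 * s (n+1)^2) := by
    intro n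
    have h1 : μ * Δ (n+2) ≤ 8*L^2 * ‖u (n+2) - uhat (n+1)‖^2 := hEB3 (n+1)
    have htri : ‖u (n+2) - uhat (n+1)‖ ≤ s (n+2) + ω (n+1) * s (n+1) := by
      have e : u (n+2) - uhat (n+1) = (u (n+2) - u (n+1)) + (u (n+1) - uhat (n+1)) := by abel
      rw [e]
      refine (norm_add_le _ _).trans ?_
      rw [hnormhat (n+1)]
      have e2 : ‖u (n+2) - u (n+1)‖ = s (n+2) := by
        rw [hss (n+2), show n+2-1 = n+1 from rfl]
      linarith [e2.le]
    have h2 : ‖u (n+2) - uhat (n+1)‖^2 ≤ 2*s (n+2)^2 + 2*(ω (n+1) * s (n+1))^2 := by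
      nlinarith [htri, norm_nonneg (u (n+2) - uhat (n+1)),
        sq_nonneg (s (n+2) - ω (n+1) * s (n+1)),
        mul_nonneg (hωn (n+1)) (hsnn (n+1)), hsnn (n+2)]
    nlinarith [h1, mul_le_mul_of_nonneg_left h2 (by positivity : (0:ℝ) ≤ 8*L^2)]
  -- constants
  obtain ⟨K₀, hK₀⟩ : ∃ K : ℝ, K = 32*L^2*μ + 128*L^3 + μ^2*L + 3*L*μ^2 + 1 := ⟨_, rfl⟩
  have hK₀pos : 0 < K₀ := by rw [hK₀]; positivity
  have hK₀1 : 32*L^2*μ + 128*L^3 + μ^2*L ≤ K₀ := by rw [hK₀]; nlinarith [mul_pos hL (mul_pos hμ hμ)]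
  have hK₀2 : 3*L*μ^2 ≤ K₀ := by
    rw [hK₀]
    nlinarith [mul_pos hL hμ, mul_pos (mul_pos hL hL) hμ, mul_pos (mul_pos hL hL) hL,
      mul_pos (mul_pos hμ hμ) hL]
  -- the two-step contraction in cleared (division-free) form
  have hstep : ∀ n, μ^3 * G (n+2) ≤ 1/2 * μ^3 * G n + K₀ * (G n - G (n+2)) := by
    intro n
    have hA1 : G (n+1) + μ/2 * s (n+1)^2 ≤ G n := hA n
    have hA2 : G (n+2) + μ/2 * s (n+2)^2 ≤ G (n+1) := hA (n+1)
    have hsq1 : (0:ℝ) ≤ μ * s (n+1)^2 := mul_nonneg hμ.le (sq_nonneg _)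
    have hsq2 : (0:ℝ) ≤ μ * s (n+2)^2 := mul_nonneg hμ.le (sq_nonneg _)
    have hDnn : 0 ≤ G n - G (n+2) := by linarith
    have hdec : μ * s (n+1)^2 + μ * s (n+2)^2 ≤ 2*(G n - G (n+2)) := by linarith
    have hGn2 : G (n+2) = Δ (n+2) + Lk (n+2)/2 * s (n+2)^2 := hGG (n+2)
    have hquadnn : (0:ℝ) ≤ Lk (n+2)/2 * s (n+2)^2 :=
      mul_nonneg (by linarith [hLkpos (n+2)]) (sq_nonneg _)
    rcases le_or_gt (4 * Lk (n+2)) μ with hc | hc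
    · -- small Lk case
      have hb : Δ (n+2) ≤ Lk (n+2) * d (n+1)^2 + Lk (n+1) * s (n+1)^2 := hB (n+1)
      have hq := hqg (n+1)
      have h1 : μ * (Lk (n+2) * d (n+1)^2) ≤ μ/2 * Δ (n+1) := by
        nlinarith [hq, hc, mul_nonneg (mul_nonneg hμ.le hμ.le) (sq_nonneg (d (n+1))),
          mul_nonneg (sub_nonneg.2 hc) (mul_nonneg hμ.le (sq_nonneg (d (n+1)))),
          mul_nonneg (sub_nonneg.2 hc) (sq_nonneg (d (n+1)))]
      have h2 : Δ (n+1) ≤ G n := by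
        have e1 := hGG (n+1)
        have : (0:ℝ) ≤ Lk (n+1)/2 * s (n+1)^2 :=
          mul_nonneg (by linarith [hLkpos (n+1)]) (sq_nonneg _)
        linarith
      have h3 : μ * (Lk (n+1) * s (n+1)^2) ≤ 2*L*(G n - G (n+2)) := by
        nlinarith [hdec, mul_nonneg (sub_nonneg.2 (hLkle (n+1))) (mul_nonneg hμ.le (sq_nonneg (s (n+1)))),
          mul_nonneg hL.le hsq2, hL]
      have h4 : μ * (Lk (n+2)/2 * s (n+2)^2) ≤ L*(G n - G (n+2)) := by
        nlinarith [hdec, mul_nonneg (sub_nonneg.2 (hLkle (n+2))) (mul_nonneg hμ.le (sq_nonneg (s (n+2)))),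
          mul_nonneg hL.le hsq1, hL]
      have h5 : μ * G (n+2) ≤ μ/2 * G n + 3*L*(G n - G (n+2)) := by
        have hbμ := mul_le_mul_of_nonneg_left hb hμ.le
        have h2μ := mul_le_mul_of_nonneg_left h2 (by linarith : (0:ℝ) ≤ μ/2)
        have hGμ : μ * G (n+2) = μ * Δ (n+2) + μ * (Lk (n+2)/2 * s (n+2)^2) := by
          rw [hGn2]; ring
        nlinarith [hbμ, h2μ, h1, h3, h4]
      nlinarith [mul_le_mul_of_nonneg_left h5 (mul_nonneg hμ.le hμ.le),
        mul_nonneg (sub_nonneg.2 hK₀2) hDnn]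
    · -- large Lk case
      have he : μ * Δ (n+2) ≤ 16*L^2 * (s (n+2)^2 + ω (n+1)^2 * s (n+1)^2) := hEB4 n
      have hωq : Lk (n+2) * ω (n+1)^2 ≤ Lk (n+1) := hωsq (n+1)
      have hω2 : μ * ω (n+1)^2 ≤ 4*L := by
        nlinarith [sq_nonneg (ω (n+1)), hLkle (n+1), hc,
          mul_nonneg (by linarith : (0:ℝ) ≤ 4*Lk (n+2) - μ) (sq_nonneg (ω (n+1)))]
      have h1 : μ^2 * Δ (n+2) ≤ 16*L^2*(μ*s (n+2)^2) + 64*L^3*s (n+1)^2 := by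
        nlinarith [mul_le_mul_of_nonneg_left he hμ.le,
          mul_le_mul_of_nonneg_left hω2 (mul_nonneg (by positivity : (0:ℝ) ≤ 16*L^2) (sq_nonneg (s (n+1))))]
      have h2 : μ^3 * Δ (n+2) ≤ (32*L^2*μ + 128*L^3)*(G n - G (n+2)) := by
        nlinarith [mul_le_mul_of_nonneg_left h1 hμ.le,
          mul_le_mul_of_nonneg_left hdec (by positivity : (0:ℝ) ≤ 16*L^2*μ),
          mul_le_mul_of_nonneg_left hdec (by positivity : (0:ℝ) ≤ 64*L^3),
          mul_nonneg (by positivity : (0:ℝ) ≤ 16*L^2*μ) hsq1,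
          mul_nonneg (by positivity : (0:ℝ) ≤ 64*L^3) hsq2]
      have h3 : μ^3 * (Lk (n+2)/2 * s (n+2)^2) ≤ μ^2*L*(G n - G (n+2)) := by
        nlinarith [mul_le_mul_of_nonneg_left hdec (by positivity : (0:ℝ) ≤ μ^2*L/2),
          mul_nonneg (mul_nonneg (mul_nonneg hμ.le hμ.le) hμ.le)
            (mul_nonneg (sub_nonneg.2 (hLkle (n+2))) (sq_nonneg (s (n+2)))),
          mul_nonneg (by positivity : (0:ℝ) ≤ μ^2*L/2) hsq1]
      have hGμ : μ^3 * G (n+2) = μ^3 * Δ (n+2) + μ^3 * (Lk (n+2)/2 * s (n+2)^2) := by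
        rw [hGn2]; ring
      nlinarith [h2, h3, hGnn n, mul_nonneg (sub_nonneg.2 hK₀1) hDnn,
        mul_nonneg (mul_nonneg (mul_nonneg hμ.le hμ.le) hμ.le) (hGnn n)]
  -- contraction ratio
  have hPpos : (0:ℝ) < μ^3 + K₀ := by positivity
  have hcontr : ∀ n, G (n+2) ≤ ((μ^3/2 + K₀)/(μ^3 + K₀)) * G n := by
    intro n
    rw [div_mul_eq_mul_div, le_div_iff₀ hPpos]
    nlinarith [hstep n]
  have hτ₂pos : (0:ℝ) < (μ^3/2 + K₀)/(μ^3 + K₀) := div_pos (by positivity) hPpos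
  have hτ₂lt1 : (μ^3/2 + K₀)/(μ^3 + K₀) < 1 := by
    rw [div_lt_one hPpos]
    nlinarith [pow_pos hμ 3]
  obtain ⟨τ₂, hτ₂⟩ : ∃ t : ℝ, t = (μ^3/2 + K₀)/(μ^3 + K₀) := ⟨_, rfl⟩
  have hτ₂pos' : 0 < τ₂ := by rw [hτ₂]; exact hτ₂pos
  have hτ₂lt1' : τ₂ < 1 := by rw [hτ₂]; exact hτ₂lt1
  have hcontr' : ∀ n, G (n+2) ≤ τ₂ * G n := by intro n; rw [hτ₂]; exact hcontr n
  -- geometric decay of G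
  have hG1 : G 1 ≤ G 0 := by
    have := hA 0
    nlinarith [mul_nonneg hμ.le (sq_nonneg (s 1))]
  have hpair : ∀ j, G (2*j) ≤ τ₂^j * G 0 ∧ G (2*j+1) ≤ τ₂^j * G 0 := by
    intro j
    induction j with
    | zero =>
      constructor
      · norm_num
      · norm_num
        exact hG1
    | succ j ih =>
      have e1 : 2*(j+1) = (2*j) + 2 := by ring
      have e2 : 2*(j+1)+1 = (2*j+1) + 2 := by ring
      constructor
      · rw [e1]
        calc G (2*j+2) ≤ τ₂ * G (2*j) := hcontr' (2*j)
          _ ≤ τ₂ * (τ₂^j * G 0) := mul_le_mul_of_nonneg_left ih.1 hτ₂pos'.le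
          _ = τ₂^(j+1) * G 0 := by ring
      · rw [e2]
        calc G (2*j+1+2) ≤ τ₂ * G (2*j+1) := hcontr' (2*j+1)
          _ ≤ τ₂ * (τ₂^j * G 0) := mul_le_mul_of_nonneg_left ih.2 hτ₂pos'.le
          _ = τ₂^(j+1) * G 0 := by ring
  have hGdecay : ∀ k, G k ≤ τ₂^(k/2) * G 0 := by
    intro k
    rcases Nat.even_or_odd k with ⟨j, hj⟩ | ⟨j, hj⟩
    · rw [show k = 2*j from by omega, show (2*j)/2 = j from by omega]
      exact (hpair j).1
    · rw [show k = 2*j+1 from by omega, show (2*j+1)/2 = j from by omega]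
      exact (hpair j).2
  have hds : ∀ k, μ/2 * d k^2 ≤ τ₂^(k/2) * G 0 := by
    intro k
    have h1 := hqg k
    have h2 : Δ k ≤ G k := by
      have e := hGG k
      nlinarith [mul_nonneg (le_of_lt (hLkpos k)) (sq_nonneg (s k))]
    linarith [hGdecay k]
  -- define the rate and constant
  have hτ₂nn : 0 ≤ τ₂ := hτ₂pos'.le
  obtain ⟨ρ, hρdef⟩ : ∃ r : ℝ, r = Real.sqrt τ₂ := ⟨_, rfl⟩
  have hρpos : 0 < ρ := by rw [hρdef]; exact Real.sqrt_pos.2 hτ₂pos'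
  have hρρ : ρ^2 = τ₂ := by rw [hρdef]; exact Real.sq_sqrt hτ₂nn
  have hρlt1 : ρ < 1 := by nlinarith [hρρ, hτ₂lt1', hρpos]
  obtain ⟨τ, hτdef⟩ : ∃ r : ℝ, r = Real.sqrt ρ := ⟨_, rfl⟩
  have hτpos : 0 < τ := by rw [hτdef]; exact Real.sqrt_pos.2 hρpos
  have hττ : τ^2 = ρ := by rw [hτdef]; exact Real.sq_sqrt hρpos.le
  have hτlt1 : τ < 1 := by nlinarith [hττ, hρlt1, hτpos]
  have hq0 : (0:ℝ) ≤ Real.sqrt (2/μ * G 0) := Real.sqrt_nonneg _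
  refine ⟨Real.sqrt (2/μ * G 0) / τ + 1, by positivity, τ, hτpos, hτlt1, ?_⟩
  intro k
  rw [← hdd k]
  have h1 : d k^2 ≤ 2/μ * G 0 * τ₂^(k/2) := by
    rw [show 2/μ * G 0 * τ₂^(k/2) = (2*(τ₂^(k/2) * G 0))/μ from by ring, le_div_iff₀ hμ]
    nlinarith [hds k]
  have h2 : d k ≤ Real.sqrt (2/μ * G 0 * τ₂^(k/2)) := by
    rw [← Real.sqrt_sq (hdnn k)]
    exact Real.sqrt_le_sqrt h1
  have h2μnn : (0:ℝ) ≤ 2/μ * G 0 := by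
    have := hGnn 0
    positivity
  have h3 : Real.sqrt (2/μ * G 0 * τ₂^(k/2)) = Real.sqrt (2/μ * G 0) * ρ^(k/2) := by
    have e : τ₂^(k/2) = (ρ^(k/2))^2 := by rw [← hρρ]; ring
    rw [Real.sqrt_mul h2μnn, e, Real.sqrt_sq (pow_nonneg hρpos.le _)]
  have e4 : ρ^(k/2) = τ^(2*(k/2)) := by rw [pow_mul, hττ]
  have h5 : τ^(2*(k/2)+1) ≤ τ^k :=
    pow_le_pow_of_le_one hτpos.le hτlt1.le (by omega : k ≤ 2*(k/2)+1)
  have hstep2 : ρ^(k/2)*τ ≤ τ^k := by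
    rw [e4, ← pow_succ]
    exact h5
  have hstep1 : Real.sqrt (2/μ * G 0) * ρ^(k/2)
      = (Real.sqrt (2/μ * G 0)/τ) * (ρ^(k/2)*τ) := by
    field_simp
  have hτk : (0:ℝ) ≤ τ^k := pow_nonneg hτpos.le k
  calc d k ≤ Real.sqrt (2/μ * G 0 * τ₂^(k/2)) := h2
    _ = (Real.sqrt (2/μ * G 0)/τ) * (ρ^(k/2)*τ) := by rw [h3, hstep1]
    _ ≤ (Real.sqrt (2/μ * G 0)/τ) * τ^k :=
        mul_le_mul_of_nonneg_left hstep2 (div_nonneg hq0 hτpos.le)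
    _ ≤ (Real.sqrt (2/μ * G 0)/τ + 1) * τ^k :=
        mul_le_mul_of_nonneg_right (by linarith) hτk
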